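/- Let G be a chain-connected anterial graph over a finite node set V, and let i and j be nodes lying in distinct chain components of G such that i ∉ ant_G(j) and j ∉ ant_G(i). If there is a primitive inducing path between the nodes τ(i) and τ(j) in the collapsed graph G_col, then there is a primitive inducing path between i and j in G. -/

import Mathlib

open MeasureTheory

universe u v w

/-! ## Mixed graphs -/

/-- A mixed graph over a node set `V`: directed, undirected and bidirected edges.
The undirected and bidirected edge relations are read symmetrically. -/
structure MixedGraph (V : Type u) where
  dir : V → V → Prop
  undir : V → V → Prop
  bidir : V → V → Prop

namespace MixedGraph

variable {V : Type u} (G : MixedGraph V)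

/-- The (symmetrised) undirected-edge relation: there is an undirected edge between `a` and `b`. -/
def Undir (a b : V) : Prop := G.undir a b ∨ G.undir b a

/-- The (symmetrised) bidirected-edge relation. -/
def Bidir (a b : V) : Prop := G.bidir a b ∨ G.bidir b a

/-- Two nodes are adjacent if they are joined by an edge of any type. -/
def Adj (a b : V) : Prop := G.dir a b ∨ G.dir b a ∨ G.Undir a b ∨ G.Bidir a b

/-- One step of a semi-directed path: a directed edge `a → b` or an undirected edge. -/
def sdStep (a b : V) : Prop := G.dir a b ∨ G.Undir a b

/-- There is a semi-directed path (possibly trivial) from `a` to `b`. -/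
def SemiDirReach (a b : V) : Prop := Relation.ReflTransGen G.sdStep a b

/-- The anterior of a node set `S`. -/
def ant (S : Set V) : Set V := {x | x ∉ S ∧ ∃ i ∈ S, G.SemiDirReach x i}

/-- There is a semi-directed cycle in `G`. -/
def HasSemiDirCycle : Prop := ∃ a b, G.dir a b ∧ G.SemiDirReach b a

/-- A chain mixed graph: no semi-directed cycles. -/
def IsCMG : Prop := ¬ G.HasSemiDirCycle

/-- An anterial graph: a chain mixed graph in which no two nodes joined by a bidirected
edge are connected by a semi-directed path. -/
def IsAnterial : Prop := G.IsCMG ∧ ∀ a b, G.Bidir a b → ¬ G.SemiDirReach a b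

/-- The chain component of a node `i`: all nodes connected to `i` by a sequence of
undirected edges (including `i` itself). -/
def ChainComp (i : V) : Set V := {j | Relation.ReflTransGen G.Undir i j}

/-- Chain-connected: `i ↔ j` implies `i ↔ k` for every `k` in the chain component of `j`. -/
def ChainConnected : Prop := ∀ i j k : V, G.Bidir i j → k ∈ G.ChainComp j → G.Bidir i k

/-- The neighbours of a node. -/
def neSet (i : V) : Set V := {x | G.Undir x i}

/-- The parents of a node. -/
def paSet (i : V) : Set V := {x | G.dir x i}

lemma undir_symmetric : Symmetric G.Undir := fun _ _ h => h.elim Or.inr Or.inl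

end MixedGraph

/-- The kind of an edge traversed on a walk, relative to the direction of travel. -/
inductive EdgeKind : Type
  | dirR   -- directed edge pointing forwards
  | dirL   -- directed edge pointing backwards
  | undirE -- undirected edge
  | bidirE -- bidirected edge

/-- Whether an edge of the given kind joins `a` to `b` (in the direction of travel). -/
def MixedGraph.edgeHolds {V : Type u} (G : MixedGraph V) : EdgeKind → V → V → Prop
  | .dirR, a, b => G.dir a b
  | .dirL, a, b => G.dir b a
  | .undirE, a, b => G.Undir a b
  | .bidirE, a, b => G.Bidir a b

/-- A walk in a mixed graph: a sequence of nodes in which every pair of consecutive nodes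
is joined by an edge (nodes and edges may repeat). -/
structure GWalk {V : Type u} (G : MixedGraph V) where
  len : ℕ
  node : ℕ → V
  kind : ℕ → EdgeKind
  valid : ∀ k, k < len → G.edgeHolds (kind k) (node k) (node (k + 1))

namespace GWalk

variable {V : Type u} {G : MixedGraph V} (w : GWalk G)

/-- The nodes with indices in `[a, b]` form a section of the walk: a maximal subwalk
all of whose edges are undirected. -/
def IsSection (a b : ℕ) : Prop :=
  a ≤ b ∧ b ≤ w.len ∧ (∀ k, a ≤ k → k < b → w.kind k = EdgeKind.undirE) ∧
    (a = 0 ∨ w.kind (a - 1) ≠ EdgeKind.undirE) ∧ (b = w.len ∨ w.kind b ≠ EdgeKind.undirE)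

/-- A collider section: the two edges of the walk immediately adjacent to the section
both have an arrowhead at the section. -/
def IsColliderSection (a b : ℕ) : Prop :=
  w.IsSection a b ∧ 0 < a ∧ b < w.len ∧
    (w.kind (a - 1) = EdgeKind.dirR ∨ w.kind (a - 1) = EdgeKind.bidirE) ∧
    (w.kind b = EdgeKind.dirL ∨ w.kind b = EdgeKind.bidirE)

/-- The walk is connecting given `C`: every collider section contains a node of `C` and
every non-collider section contains no node of `C`. -/
def ConnectingGiven (C : Set V) : Prop :=
  ∀ a b : ℕ, w.IsSection a b →
    (w.IsColliderSection a b → ∃ m, a ≤ m ∧ m ≤ b ∧ w.node m ∈ C) ∧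
    (¬ w.IsColliderSection a b → ∀ m, a ≤ m → m ≤ b → w.node m ∉ C)

/-- A semi-directed walk: every edge is undirected or directed forwards. -/
def IsSemiDirected : Prop :=
  ∀ k, k < w.len → (w.kind k = EdgeKind.dirR ∨ w.kind k = EdgeKind.undirE)

end GWalk

/-- Graphical separation: `A ⊥_G B | C` holds if there is no connecting walk given `C`
between a node of `A` and a node of `B`. -/
def MixedGraph.Sep {V : Type u} (G : MixedGraph V) (A B C : Set V) : Prop :=
  ¬ ∃ w : GWalk G, w.node 0 ∈ A ∧ w.node w.len ∈ B ∧ w.ConnectingGiven C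

/-- A primitive inducing path between `i` and `j`. -/
def PrimitiveInducingPath {V : Type u} (G : MixedGraph V) (i j : V) : Prop :=
  ∃ w : GWalk G, 2 ≤ w.len ∧ w.node 0 = i ∧ w.node w.len = j ∧
    (∀ m, 0 < m → m < w.len → w.node m ∈ G.ant {i, j}) ∧
    (∀ k, 1 ≤ k → k + 1 < w.len → (w.kind k = EdgeKind.bidirE ∨ w.kind k = EdgeKind.undirE)) ∧
    (w.kind 0 = EdgeKind.bidirE ∨ w.kind 0 = EdgeKind.dirR) ∧
    (w.kind (w.len - 1) = EdgeKind.bidirE ∨ w.kind (w.len - 1) = EdgeKind.dirL)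

/-- A mixed graph is maximal if every pair of non-adjacent nodes can be separated by some set. -/
def IsMaximal {V : Type u} (G : MixedGraph V) : Prop :=
  ∀ i j : V, i ≠ j → ¬ G.Adj i j → ∃ C : Set V, i ∉ C ∧ j ∉ C ∧ G.Sep {i} {j} C

/-! ## Independence models -/

/-- Pairwise disjointness of three sets. -/
def Disjoint3 {V : Type u} (A B C : Set V) : Prop :=
  Disjoint A B ∧ Disjoint A C ∧ Disjoint B C

/-- A compositional graphoid: an independence model over `V` satisfying symmetry,
decomposition, weak union, contraction, intersection and composition. -/
structure IsCompositionalGraphoid {V : Type u} (J : Set V → Set V → Set V → Prop) : Prop where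
  symm : ∀ A B C : Set V, Disjoint3 A B C → J A B C → J B A C
  decomposition : ∀ A B C D : Set V, Disjoint3 A (B ∪ D) C → J A (B ∪ D) C → J A B C
  weakUnion : ∀ A B C D : Set V, Disjoint3 A (B ∪ D) C → J A (B ∪ D) C → J A B (C ∪ D)
  contraction : ∀ A B C D : Set V, Disjoint3 A B (C ∪ D) → Disjoint3 A D C →
    J A B (C ∪ D) → J A D C → J A (B ∪ D) C
  intersection : ∀ A B C D : Set V, Disjoint3 A B (C ∪ D) → Disjoint3 A D (C ∪ B) →
    J A B (C ∪ D) → J A D (C ∪ B) → J A (B ∪ D) C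
  composition : ∀ A B C D : Set V, Disjoint3 A B C → Disjoint3 A D C →
    J A B C → J A D C → J A (B ∪ D) C

/-- An independence model `J` is Markovian to a mixed graph `G` if every graphical
separation implies the corresponding independence statement. -/
def MarkovTo {V : Type u} (J : Set V → Set V → Set V → Prop) (G : MixedGraph V) : Prop :=
  ∀ A B C : Set V, Disjoint3 A B C → G.Sep A B C → J A B C

/-! ## The collapsed graph -/

/-- The equivalence relation "being in the same chain component". -/
def MixedGraph.undirSetoid {V : Type*} (G : MixedGraph V) : Setoid V where
  r a b := Relation.ReflTransGen G.Undir a b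
  iseqv := ⟨fun _ => Relation.ReflTransGen.refl,
    fun {a b} (h : Relation.ReflTransGen G.Undir a b) => show Relation.ReflTransGen G.Undir b a by
      induction h with
      | refl => exact Relation.ReflTransGen.refl
      | tail _ hbc ih => exact Relation.ReflTransGen.head (G.undir_symmetric hbc) ih,
    fun h h' => Relation.ReflTransGen.trans h h'⟩

/-- The nodes of the collapsed graph: the chain components of `G`. -/
def ColNode {V : Type*} (G : MixedGraph V) : Type _ := Quotient G.undirSetoid

/-- The collapsed graph `G_col` of a chain-connected anterial graph `G`: nodes are the
chain components of `G`, with `τ(i) → τ(j)` whenever `i' → j'` in `G` for some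
`i' ∈ τ(i)`, `j' ∈ τ(j)`, and `τ(i) ↔ τ(j)` whenever `i' ↔ j'` in `G` for some
`i' ∈ τ(i)`, `j' ∈ τ(j)`; it has no undirected edges. -/
def colGraph {V : Type*} (G : MixedGraph V) : MixedGraph (ColNode G) where
  dir x y := ∃ a b : V, Quotient.mk G.undirSetoid a = x ∧ Quotient.mk G.undirSetoid b = y ∧ G.dir a b
  undir _ _ := False
  bidir x y := ∃ a b : V, Quotient.mk G.undirSetoid a = x ∧ Quotient.mk G.undirSetoid b = y ∧ G.Bidir a b

/-! ## Auxiliary lemmas for Statement 12 -/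

section Aux

variable {V : Type*} (G : MixedGraph V)

lemma MixedGraph.bidir_symm {a b : V} (h : G.Bidir a b) : G.Bidir b a :=
  h.elim Or.inr Or.inl

lemma undirReach_of_mk_eq {a b : V}
    (h : Quotient.mk G.undirSetoid a = Quotient.mk G.undirSetoid b) :
    Relation.ReflTransGen G.Undir a b :=
  Quotient.exact h

lemma semiDirReach_of_undirReach {a b : V}
    (h : Relation.ReflTransGen G.Undir a b) : G.SemiDirReach a b :=
  Relation.ReflTransGen.mono (fun _ _ hu => Or.inr hu) _ _ h

/-- Lift a bidirected edge of the collapsed graph to any representatives. -/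
lemma bidir_lift (hcc : G.ChainConnected) {x y : ColNode G} {a b : V}
    (h : (colGraph G).Bidir x y)
    (ha : Quotient.mk G.undirSetoid a = x) (hb : Quotient.mk G.undirSetoid b = y) :
    G.Bidir a b := by
  have key : ∀ a' b' : V, G.Bidir a' b' →
      Relation.ReflTransGen G.Undir a' a → Relation.ReflTransGen G.Undir b' b →
      G.Bidir a b := by
    intro a' b' hbid hra hrb
    have h1 : G.Bidir a' b := hcc a' b' b hbid hrb
    have h2 : G.Bidir b a' := G.bidir_symm h1
    have h3 : G.Bidir b a := hcc b a' a h2 hra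
    exact G.bidir_symm h3
  rcases h with ⟨a', b', ha', hb', hbid⟩ | ⟨b', a', hb', ha', hbid⟩
  · exact key a' b' hbid (undirReach_of_mk_eq G (ha'.trans ha.symm))
      (undirReach_of_mk_eq G (hb'.trans hb.symm))
  · exact key a' b' (G.bidir_symm hbid) (undirReach_of_mk_eq G (ha'.trans ha.symm))
      (undirReach_of_mk_eq G (hb'.trans hb.symm))

/-- Lift a semi-directed reach of the collapsed graph to any representatives. -/
lemma reach_lift {x y : ColNode G} (h : (colGraph G).SemiDirReach x y) :
    ∀ a b : V, Quotient.mk G.undirSetoid a = x → Quotient.mk G.undirSetoid b = y →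
      G.SemiDirReach a b := by
  induction h with
  | refl =>
    intro a b ha hb
    exact semiDirReach_of_undirReach G (undirReach_of_mk_eq G (ha.trans hb.symm))
  | @tail c y hxc step ih =>
    intro a b ha hb
    rcases step with hd | hu
    · rcases hd with ⟨a', b', ha', hb', hdd⟩
      have h1 : G.SemiDirReach a a' := ih a a' ha ha'
      have h2 : G.SemiDirReach a' b' := Relation.ReflTransGen.single (Or.inl hdd)
      have h3 : G.SemiDirReach b' b :=
        semiDirReach_of_undirReach G (undirReach_of_mk_eq G (hb'.trans hb.symm))
      exact (h1.trans h2).trans h3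
    · rcases hu with hu | hu <;> exact hu.elim

end Aux

/-! ## Statement 12 -/

/-- Let `G` be a chain-connected anterial graph and let `i`, `j` lie in distinct chain
components of `G` with `i ∉ ant_G(j)` and `j ∉ ant_G(i)`. If there is a primitive
inducing path between `τ(i)` and `τ(j)` in the collapsed graph `G_col`, then there is a
primitive inducing path between `i` and `j` in `G`. -/
theorem statement_12 {V : Type*} [Fintype V] (G : MixedGraph V)
    (hant : G.IsAnterial) (hcc : G.ChainConnected)
    (i j : V) (hij : j ∉ G.ChainComp i)
    (hi : i ∉ G.ant {j}) (hj : j ∉ G.ant {i})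
    (hpip : PrimitiveInducingPath (colGraph G)
      (Quotient.mk G.undirSetoid i) (Quotient.mk G.undirSetoid j)) :
    PrimitiveInducingPath G i j := by
  classical
  obtain ⟨cw, hlen, h0, hn, hint, hik, hk0, hkn⟩ := hpip
  set n := cw.len with hn'
  set τi := Quotient.mk G.undirSetoid i with hτi
  set τj := Quotient.mk G.undirSetoid j with hτj
  have hij' : i ≠ j := by
    intro h; exact hij (h ▸ Relation.ReflTransGen.refl)
  -- the first edge of the collapsed path is bidirected
  have hk0' : cw.kind 0 = EdgeKind.bidirE := by
    rcases hk0 with h | h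
    · exact h
    · exfalso
      have hv := cw.valid 0 (by omega)
      rw [h] at hv
      -- hv : (colGraph G).dir (cw.node 0) (cw.node 1)
      rw [h0] at hv
      rcases hv with ⟨a', b', ha', hb', hdd⟩
      have h1int := hint 1 (by omega) (by omega)
      rcases h1int with ⟨_, t, ht, hreach⟩
      rcases ht with ht | ht
      · -- reaches τi : semi-directed cycle
        refine hant.1 ⟨a', b', hdd, ?_⟩
        have r1 : G.SemiDirReach b' i := reach_lift G hreach b' i hb' ht.symm
        have r2 : G.SemiDirReach i a' :=
          semiDirReach_of_undirReach G
            ((@Relation.ReflTransGen.stdSymm _ G.Undir ⟨fun _ _ h => G.undir_symmetric h⟩).symm _ _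
              (undirReach_of_mk_eq G ha'))
        exact r1.trans r2
      · -- reaches τj : i ∈ ant {j}
        have ht' : t = τj := ht
        have r1 : G.SemiDirReach i a' :=
          semiDirReach_of_undirReach G
            ((@Relation.ReflTransGen.stdSymm _ G.Undir ⟨fun _ _ h => G.undir_symmetric h⟩).symm _ _
              (undirReach_of_mk_eq G ha'))
        have r2 : G.SemiDirReach a' b' := Relation.ReflTransGen.single (Or.inl hdd)
        have r3 : G.SemiDirReach b' j := reach_lift G hreach b' j hb' ht'.symm
        exact hi ⟨by simpa using hij', j, rfl, (r1.trans r2).trans r3⟩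
  -- the last edge of the collapsed path is bidirected
  have hkn' : cw.kind (n - 1) = EdgeKind.bidirE := by
    rcases hkn with h | h
    · exact h
    · exfalso
      have hv := cw.valid (n - 1) (by omega)
      rw [h] at hv
      have hsucc : n - 1 + 1 = n := by omega
      rw [hsucc, hn] at hv
      rcases hv with ⟨a', b', ha', hb', hdd⟩
      have h1int := hint (n - 1) (by omega) (by omega)
      rcases h1int with ⟨_, t, ht, hreach⟩
      rcases ht with ht | ht
      · -- reaches τi : j ∈ ant {i}
        have r1 : G.SemiDirReach j a' :=
          semiDirReach_of_undirReach G
            ((@Relation.ReflTransGen.stdSymm _ G.Undir ⟨fun _ _ h => G.undir_symmetric h⟩).symm _ _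
              (undirReach_of_mk_eq G ha'))
        have r2 : G.SemiDirReach a' b' := Relation.ReflTransGen.single (Or.inl hdd)
        have r3 : G.SemiDirReach b' i := reach_lift G hreach b' i hb' ht.symm
        exact hj ⟨by simpa using hij'.symm, i, rfl, (r1.trans r2).trans r3⟩
      · -- reaches τj : semi-directed cycle
        have ht' : t = τj := ht
        refine hant.1 ⟨a', b', hdd, ?_⟩
        have r1 : G.SemiDirReach b' j := reach_lift G hreach b' j hb' ht'.symm
        have r2 : G.SemiDirReach j a' :=
          semiDirReach_of_undirReach G
            ((@Relation.ReflTransGen.stdSymm _ G.Undir ⟨fun _ _ h => G.undir_symmetric h⟩).symm _ _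
              (undirReach_of_mk_eq G ha'))
        exact r1.trans r2
  -- every edge of the collapsed path is bidirected
  have hall : ∀ k, k < n → cw.kind k = EdgeKind.bidirE := by
    intro k hk
    by_cases h0k : k = 0
    · exact h0k ▸ hk0'
    by_cases hnk : k = n - 1
    · exact hnk ▸ hkn'
    rcases hik k (by omega) (by omega) with h | h
    · exact h
    · exfalso
      have hv := cw.valid k hk
      rw [h] at hv
      rcases hv with hv | hv <;> exact hv
  -- choose representatives
  set f : ℕ → V := fun m => if m = 0 then i else if m < n then (cw.node m).out else j
    with hf
  have hmk : ∀ m, m ≤ n → Quotient.mk G.undirSetoid (f m) = cw.node m := by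
    intro m hm
    by_cases hm0 : m = 0
    · subst hm0; simp only [hf, if_pos rfl]; rw [h0]
    by_cases hmn : m < n
    · simp only [hf, if_neg hm0, if_pos hmn]
      exact Quotient.out_eq _
    · have : m = n := by omega
      subst this
      simp only [hf, if_neg hm0, if_neg hmn]
      rw [hn]
  have hvalid : ∀ k, k < n → G.edgeHolds EdgeKind.bidirE (f k) (f (k + 1)) := by
    intro k hk
    have hv := cw.valid k hk
    rw [hall k hk] at hv
    exact bidir_lift G hcc hv (hmk k (by omega)) (hmk (k + 1) (by omega))
  refine ⟨⟨n, f, fun _ => EdgeKind.bidirE, hvalid⟩, hlen, ?_, ?_, ?_, ?_, Or.inl rfl,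
    Or.inl rfl⟩
  · simp [hf]
  · simp only [hf]
    rw [if_neg (by omega : ¬ n = 0), if_neg (by omega : ¬ n < n)]
  · -- internal nodes in the anterior
    intro m hm1 hm2
    have hm2' : m < n := hm2
    have hmint := hint m hm1 hm2'
    rcases hmint with ⟨hnotmem, t, ht, hreach⟩
    have hmkm := hmk m (by omega)
    constructor
    · intro hmem
      rcases hmem with hmem | hmem
      · have hmem' : f m = i := hmem
        exact hnotmem (Or.inl (by rw [← hmkm, hmem']))
      · have hmem' : f m = j := hmem
        exact hnotmem (Or.inr (by rw [← hmkm, hmem']; rfl))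
    · rcases ht with ht | ht
      · exact ⟨i, Or.inl rfl, reach_lift G hreach (f m) i hmkm ht.symm⟩
      · have ht' : t = τj := ht
        exact ⟨j, Or.inr rfl, reach_lift G hreach (f m) j hmkm ht'.symm⟩
  · intro k _ _; exact Or.inl rfl
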